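/- The configuration (0, 0, π/2) (angle mod 2π) is an interior point of the Dubins reachable set R(t) for all t in some open interval around 4π; more precisely, there exists δ₀ > 0 such that for every t with |t − 4π| < δ₀, (0, 0, π/2) lies in the interior of R(t). -/

import Mathlib

/-- The Dubins reachable set at time `t`: all configurations in ℝ² × (ℝ/2πℤ) reachable
from `(0, 0, π/2)` under `ẋ = cos φ`, `ẏ = sin φ`, `φ̇ = u`, using a measurable control
with values in `[-1, 1]`. -/
noncomputable def DubinsReach (t : ℝ) : Set (ℝ × ℝ × Real.Angle) :=
  {P | ∃ u : ℝ → ℝ, Measurable u ∧ (∀ τ, u τ ∈ Set.Icc (-1 : ℝ) 1) ∧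
    P = (∫ r in (0 : ℝ)..t, Real.cos (Real.pi / 2 + ∫ q in (0 : ℝ)..r, u q),
         ∫ r in (0 : ℝ)..t, Real.sin (Real.pi / 2 + ∫ q in (0 : ℝ)..r, u q),
         (↑(Real.pi / 2 + ∫ q in (0 : ℝ)..t, u q) : Real.Angle))}

open Real MeasureTheory intervalIntegral Set Filter

noncomputable section
namespace Dub


def DD : ℝ := 4 * π / 3

lemma DD_pos : 0 < DD := by unfold DD; positivity

/-- the control -/
def ctrl (a b c : ℝ) : ℝ → ℝ := fun τ => if τ ≤ DD then a else if τ ≤ 2*DD then b else c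

lemma ctrl_measurable (a b c : ℝ) : Measurable (ctrl a b c) := by
  unfold ctrl
  exact Measurable.ite measurableSet_Iic measurable_const
    (Measurable.ite measurableSet_Iic measurable_const measurable_const)

lemma ctrl_intervalIntegrable (a b c α β : ℝ) :
    IntervalIntegrable (ctrl a b c) volume α β := by
  rw [intervalIntegrable_iff]
  refine MeasureTheory.Integrable.mono' (g := fun _ => |a| + |b| + |c|)
    (integrableOn_const measure_Ioc_lt_top.ne)
    ((ctrl_measurable a b c).aestronglyMeasurable) ?_
  filter_upwards with q
  unfold ctrl
  rw [Real.norm_eq_abs]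
  have := abs_nonneg a; have := abs_nonneg b; have := abs_nonneg c
  split_ifs <;> simp <;> linarith

lemma inner₁ {a b c r : ℝ} (h0 : 0 ≤ r) (hr : r ≤ DD) :
    ∫ q in (0:ℝ)..r, ctrl a b c q = a * r := by
  rw [intervalIntegral.integral_congr (g := fun _ => a) ?_, intervalIntegral.integral_const,
    smul_eq_mul, sub_zero, mul_comm]
  intro q hq
  rw [Set.uIcc_of_le h0] at hq
  exact if_pos (hq.2.trans hr)

lemma inner₂ {a b c r : ℝ} (h0 : DD ≤ r) (hr : r ≤ 2*DD) :
    ∫ q in (0:ℝ)..r, ctrl a b c q = a * DD + b * (r - DD) := by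
  rw [← intervalIntegral.integral_add_adjacent_intervals (b := DD)
    (ctrl_intervalIntegrable a b c 0 DD) (ctrl_intervalIntegrable a b c DD r),
    inner₁ DD_pos.le le_rfl]
  congr 1
  rw [intervalIntegral.integral_congr_ae (g := fun _ => b) ?_, intervalIntegral.integral_const,
    smul_eq_mul, mul_comm]
  filter_upwards with q hq
  rw [Set.uIoc_of_le h0] at hq
  unfold ctrl
  rw [if_neg (not_le.2 hq.1), if_pos (hq.2.trans hr)]

lemma inner₃ {a b c r : ℝ} (h0 : 2*DD ≤ r) :
    ∫ q in (0:ℝ)..r, ctrl a b c q = a * DD + b * DD + c * (r - 2*DD) := by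
  rw [← intervalIntegral.integral_add_adjacent_intervals (b := 2*DD)
    (ctrl_intervalIntegrable a b c 0 (2*DD)) (ctrl_intervalIntegrable a b c (2*DD) r),
    inner₂ (by linarith [DD_pos]) le_rfl]
  have heq : a * DD + b * (2*DD - DD) = a * DD + b * DD := by ring
  rw [heq]
  congr 1
  rw [intervalIntegral.integral_congr_ae (g := fun _ => c) ?_, intervalIntegral.integral_const,
    smul_eq_mul, mul_comm]
  filter_upwards with q hq
  rw [Set.uIoc_of_le h0] at hq
  unfold ctrl
  have h1 : ¬ q ≤ DD := by push_neg; linarith [DD_pos, hq.1]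
  have h2 : ¬ q ≤ 2*DD := not_le.2 hq.1
  rw [if_neg h1, if_neg h2]

/-- integral of cos on a segment with affine phase -/
lemma seg_cos {m : ℝ} (hm : m ≠ 0) (k α β : ℝ) :
    ∫ r in α..β, Real.cos (k + m * (r - α))
      = (Real.sin (k + m * (β - α)) - Real.sin k) / m := by
  have h : ∀ x ∈ Set.uIcc α β, HasDerivAt (fun r => Real.sin (k + m * (r - α)) / m)
      (Real.cos (k + m * (x - α))) x := by
    intro x _
    have h1 : HasDerivAt (fun r : ℝ => k + m * (r - α)) m x := by
      simpa using (((hasDerivAt_id x).sub_const α).const_mul m).const_add k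
    have h2 := (h1.sin).div_const m
    rwa [mul_div_cancel_right₀ _ hm] at h2
  have hci : Continuous fun r : ℝ => Real.cos (k + m * (r - α)) := by fun_prop
  rw [intervalIntegral.integral_eq_sub_of_hasDerivAt h (hci.intervalIntegrable α β)]
  rw [div_sub_div_same]
  simp




lemma seg_sin {m : ℝ} (hm : m ≠ 0) (k α β : ℝ) :
    ∫ r in α..β, Real.sin (k + m * (r - α))
      = (Real.cos k - Real.cos (k + m * (β - α))) / m := by
  have h : ∀ x ∈ Set.uIcc α β, HasDerivAt (fun r => -Real.cos (k + m * (r - α)) / m)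
      (Real.sin (k + m * (x - α))) x := by
    intro x _
    have h1 : HasDerivAt (fun r : ℝ => k + m * (r - α)) m x := by
      simpa using (((hasDerivAt_id x).sub_const α).const_mul m).const_add k
    have h2 := ((h1.cos).neg).div_const m
    rwa [show -(-Real.sin (k + m * (x - α)) * m) / m = Real.sin (k + m * (x - α)) by
      field_simp] at h2
  have hci : Continuous fun r : ℝ => Real.sin (k + m * (r - α)) := by fun_prop
  rw [intervalIntegral.integral_eq_sub_of_hasDerivAt h (hci.intervalIntegrable α β)]
  field_simp
  ring

def th1 (a : ℝ) : ℝ := π/2 + a * DD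
def th2 (a b : ℝ) : ℝ := π/2 + a * DD + b * DD
def th3 (a b c t : ℝ) : ℝ := π/2 + a * DD + b * DD + c * (t - 2*DD)

lemma xpart {a b c t : ℝ} (ha : a ≠ 0) (hb : b ≠ 0) (hc : c ≠ 0) (ht : 2*DD ≤ t) :
    ∫ r in (0:ℝ)..t, Real.cos (π/2 + ∫ q in (0:ℝ)..r, ctrl a b c q)
      = (Real.sin (th1 a) - Real.sin (π/2)) / a + ((Real.sin (th2 a b) - Real.sin (th1 a)) / b
        + (Real.sin (th3 a b c t) - Real.sin (th2 a b)) / c) := by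
  have hI : ∀ α β, IntervalIntegrable (ctrl a b c) volume α β := ctrl_intervalIntegrable a b c
  have hcont : Continuous fun r => Real.cos (π/2 + ∫ q in (0:ℝ)..r, ctrl a b c q) :=
    Real.continuous_cos.comp (continuous_const.add (intervalIntegral.continuous_primitive hI 0))
  rw [← intervalIntegral.integral_add_adjacent_intervals (a := (0:ℝ)) (b := DD) (c := t)
      (hcont.intervalIntegrable _ _) (hcont.intervalIntegrable _ _),
    ← intervalIntegral.integral_add_adjacent_intervals (a := DD) (b := 2*DD) (c := t)
      (hcont.intervalIntegrable _ _) (hcont.intervalIntegrable _ _)]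
  have hDt : DD ≤ t := le_trans (by linarith [DD_pos]) ht
  have e1 : ∫ r in (0:ℝ)..DD, Real.cos (π/2 + ∫ q in (0:ℝ)..r, ctrl a b c q)
      = (Real.sin (th1 a) - Real.sin (π/2)) / a := by
    have hEq : EqOn (fun r => Real.cos (π/2 + ∫ q in (0:ℝ)..r, ctrl a b c q))
        (fun r => Real.cos (π/2 + a * (r - 0))) (Set.uIcc (0:ℝ) DD) := by
      intro r hr
      rw [Set.uIcc_of_le DD_pos.le] at hr
      simp only [inner₁ hr.1 hr.2]
      norm_num
    rw [intervalIntegral.integral_congr hEq, seg_cos ha]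
    unfold th1; norm_num
  have e2 : ∫ r in DD..(2*DD), Real.cos (π/2 + ∫ q in (0:ℝ)..r, ctrl a b c q)
      = (Real.sin (th2 a b) - Real.sin (th1 a)) / b := by
    have hEq : EqOn (fun r => Real.cos (π/2 + ∫ q in (0:ℝ)..r, ctrl a b c q))
        (fun r => Real.cos (th1 a + b * (r - DD))) (Set.uIcc DD (2*DD)) := by
      intro r hr
      rw [Set.uIcc_of_le (by linarith [DD_pos])] at hr
      simp only [inner₂ hr.1 hr.2]
      unfold th1; ring_nf
    rw [intervalIntegral.integral_congr hEq, seg_cos hb]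
    unfold th1 th2; ring_nf
  have e3 : ∫ r in (2*DD)..t, Real.cos (π/2 + ∫ q in (0:ℝ)..r, ctrl a b c q)
      = (Real.sin (th3 a b c t) - Real.sin (th2 a b)) / c := by
    have hEq : EqOn (fun r => Real.cos (π/2 + ∫ q in (0:ℝ)..r, ctrl a b c q))
        (fun r => Real.cos (th2 a b + c * (r - 2*DD))) (Set.uIcc (2*DD) t) := by
      intro r hr
      rw [Set.uIcc_of_le ht] at hr
      simp only [inner₃ hr.1]
      unfold th2; ring_nf
    rw [intervalIntegral.integral_congr hEq, seg_cos hc]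
    unfold th2 th3; ring_nf
  rw [e1, e2, e3]

lemma ypart {a b c t : ℝ} (ha : a ≠ 0) (hb : b ≠ 0) (hc : c ≠ 0) (ht : 2*DD ≤ t) :
    ∫ r in (0:ℝ)..t, Real.sin (π/2 + ∫ q in (0:ℝ)..r, ctrl a b c q)
      = (Real.cos (π/2) - Real.cos (th1 a)) / a + ((Real.cos (th1 a) - Real.cos (th2 a b)) / b
        + (Real.cos (th2 a b) - Real.cos (th3 a b c t)) / c) := by
  have hI : ∀ α β, IntervalIntegrable (ctrl a b c) volume α β := ctrl_intervalIntegrable a b c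
  have hcont : Continuous fun r => Real.sin (π/2 + ∫ q in (0:ℝ)..r, ctrl a b c q) :=
    Real.continuous_sin.comp (continuous_const.add (intervalIntegral.continuous_primitive hI 0))
  rw [← intervalIntegral.integral_add_adjacent_intervals (a := (0:ℝ)) (b := DD) (c := t)
      (hcont.intervalIntegrable _ _) (hcont.intervalIntegrable _ _),
    ← intervalIntegral.integral_add_adjacent_intervals (a := DD) (b := 2*DD) (c := t)
      (hcont.intervalIntegrable _ _) (hcont.intervalIntegrable _ _)]
  have e1 : ∫ r in (0:ℝ)..DD, Real.sin (π/2 + ∫ q in (0:ℝ)..r, ctrl a b c q)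
      = (Real.cos (π/2) - Real.cos (th1 a)) / a := by
    have hEq : EqOn (fun r => Real.sin (π/2 + ∫ q in (0:ℝ)..r, ctrl a b c q))
        (fun r => Real.sin (π/2 + a * (r - 0))) (Set.uIcc (0:ℝ) DD) := by
      intro r hr
      rw [Set.uIcc_of_le DD_pos.le] at hr
      simp only [inner₁ hr.1 hr.2]
      norm_num
    rw [intervalIntegral.integral_congr hEq, seg_sin ha]
    unfold th1; norm_num
  have e2 : ∫ r in DD..(2*DD), Real.sin (π/2 + ∫ q in (0:ℝ)..r, ctrl a b c q)
      = (Real.cos (th1 a) - Real.cos (th2 a b)) / b := by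
    have hEq : EqOn (fun r => Real.sin (π/2 + ∫ q in (0:ℝ)..r, ctrl a b c q))
        (fun r => Real.sin (th1 a + b * (r - DD))) (Set.uIcc DD (2*DD)) := by
      intro r hr
      rw [Set.uIcc_of_le (by linarith [DD_pos])] at hr
      simp only [inner₂ hr.1 hr.2]
      unfold th1; ring_nf
    rw [intervalIntegral.integral_congr hEq, seg_sin hb]
    unfold th1 th2; ring_nf
  have e3 : ∫ r in (2*DD)..t, Real.sin (π/2 + ∫ q in (0:ℝ)..r, ctrl a b c q)
      = (Real.cos (th2 a b) - Real.cos (th3 a b c t)) / c := by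
    have hEq : EqOn (fun r => Real.sin (π/2 + ∫ q in (0:ℝ)..r, ctrl a b c q))
        (fun r => Real.sin (th2 a b + c * (r - 2*DD))) (Set.uIcc (2*DD) t) := by
      intro r hr
      rw [Set.uIcc_of_le ht] at hr
      simp only [inner₃ hr.1]
      unfold th2; ring_nf
    rw [intervalIntegral.integral_congr hEq, seg_sin hc]
    unfold th2 th3; ring_nf
  rw [e1, e2, e3]

lemma apart {a b c t : ℝ} (ht : 2*DD ≤ t) :
    π/2 + ∫ q in (0:ℝ)..t, ctrl a b c q = th3 a b c t := by
  rw [inner₃ ht]; unfold th3; ring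




lemma sin_7pi6 : Real.sin (7*π/6) = -(1/2) := by
  rw [show (7:ℝ)*π/6 = π + π/6 by ring, Real.sin_add]
  simp [Real.sin_pi_div_six]
lemma cos_7pi6 : Real.cos (7*π/6) = -(Real.sqrt 3/2) := by
  rw [show (7:ℝ)*π/6 = π + π/6 by ring, Real.cos_add]
  simp [Real.cos_pi_div_six]
lemma sin_11pi6 : Real.sin (11*π/6) = -(1/2) := by
  rw [show (11:ℝ)*π/6 = 2*π - π/6 by ring, Real.sin_sub]
  simp [Real.sin_pi_div_six]
lemma cos_11pi6 : Real.cos (11*π/6) = Real.sqrt 3/2 := by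
  rw [show (11:ℝ)*π/6 = 2*π - π/6 by ring, Real.cos_sub]
  simp [Real.cos_pi_div_six]
lemma sin_5pi2 : Real.sin (5*π/2) = 1 := by
  rw [show (5:ℝ)*π/2 = π/2 + 2*π by ring, Real.sin_add]
  simp
lemma cos_5pi2 : Real.cos (5*π/2) = 0 := by
  rw [show (5:ℝ)*π/2 = π/2 + 2*π by ring, Real.cos_add]
  simp

abbrev EE := ℝ × ℝ × ℝ × ℝ


def Ff : EE → EE := fun p =>
  ((Real.sin (th1 p.1) - Real.sin (π/2)) / p.1
      + ((Real.sin (th2 p.1 p.2.1) - Real.sin (th1 p.1)) / p.2.1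
        + (Real.sin (th3 p.1 p.2.1 p.2.2.1 p.2.2.2) - Real.sin (th2 p.1 p.2.1)) / p.2.2.1),
   (Real.cos (π/2) - Real.cos (th1 p.1)) / p.1
      + ((Real.cos (th1 p.1) - Real.cos (th2 p.1 p.2.1)) / p.2.1
        + (Real.cos (th2 p.1 p.2.1) - Real.cos (th3 p.1 p.2.1 p.2.2.1 p.2.2.2)) / p.2.2.1),
   th3 p.1 p.2.1 p.2.2.1 p.2.2.2,
   p.2.2.2)

def p₀ : EE := (1/2, 1/2, 1/2, 4*π)

lemma th1_val : th1 (1/2) = 7*π/6 := by unfold th1 DD; ring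
lemma th2_val : th2 (1/2) (1/2) = 11*π/6 := by unfold th2 DD; ring
lemma th3_val : th3 (1/2) (1/2) (1/2) (4*π) = 5*π/2 := by unfold th3 DD; ring

lemma range_top_of_matrix (L : EE →L[ℝ] EE)
    (hL : ∀ v : EE, L v = (6*v.1 - 6*v.2.2.1,
      (2*DD - 2*Real.sqrt 3)*v.1 + (2*DD + 4*Real.sqrt 3)*v.2.1
        + (2*DD - 2*Real.sqrt 3)*v.2.2.1 + v.2.2.2,
      DD*v.1 + DD*v.2.1 + DD*v.2.2.1 + (1/2)*v.2.2.2,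
      v.2.2.2)) : LinearMap.range (L : EE →ₗ[ℝ] EE) = ⊤ := by
  have hs3 : (0:ℝ) < Real.sqrt 3 := Real.sqrt_pos.2 (by norm_num)
  have hinj : Function.Injective L := by
    intro v w hvw
    rw [hL v, hL w] at hvw
    obtain ⟨v1, v2, v3, v4⟩ := v
    obtain ⟨w1, w2, w3, w4⟩ := w
    simp only [Prod.mk.injEq] at hvw ⊢
    obtain ⟨h1, h2, h3, h4⟩ := hvw
    have hsumDD : DD * ((v1 + v2 + v3) - (w1 + w2 + w3)) = 0 := by
      linear_combination h3 - (1/2) * h4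
    have hsum : v1 + v2 + v3 = w1 + w2 + w3 := by
      rcases mul_eq_zero.mp hsumDD with h | h
      · exact absurd h (ne_of_gt DD_pos)
      · linarith
    have key : Real.sqrt 3 * (v1 - w1) = 0 := by
      linear_combination (-(1:ℝ)/12) * h2 + (1/6) * hsumDD + (1/12) * h4
        + (Real.sqrt 3/3) * hsum + (Real.sqrt 3/12) * h1
    have hd1 : v1 = w1 := by
      rcases mul_eq_zero.mp key with h | h
      · exact absurd h (ne_of_gt hs3)
      · linarith
    have hd3 : v3 = w3 := by linarith
    exact ⟨hd1, by linarith, hd3, h4⟩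
  rw [LinearMap.range_eq_top]
  exact (LinearMap.injective_iff_surjective (f := L.toLinearMap)).mp hinj

lemma exists_deriv : ∃ L : EE →L[ℝ] EE, HasStrictFDerivAt Ff L p₀ ∧ LinearMap.range (L : EE →ₗ[ℝ] EE) = ⊤ := by
  have h1 : (p₀.1 : ℝ) ≠ 0 := by norm_num [p₀]
  have h2 : (p₀.2.1 : ℝ) ≠ 0 := by norm_num [p₀]
  have h3 : (p₀.2.2.1 : ℝ) ≠ 0 := by norm_num [p₀]
  have hA : HasStrictFDerivAt (fun p : EE => p.1)
      (ContinuousLinearMap.fst ℝ ℝ (ℝ×ℝ×ℝ)) p₀ :=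
    (ContinuousLinearMap.fst ℝ ℝ (ℝ×ℝ×ℝ)).hasStrictFDerivAt
  have hB : HasStrictFDerivAt (fun p : EE => p.2.1)
      ((ContinuousLinearMap.fst ℝ ℝ (ℝ×ℝ)).comp (ContinuousLinearMap.snd ℝ ℝ (ℝ×ℝ×ℝ))) p₀ :=
    ((ContinuousLinearMap.fst ℝ ℝ (ℝ×ℝ)).comp
      (ContinuousLinearMap.snd ℝ ℝ (ℝ×ℝ×ℝ))).hasStrictFDerivAt
  have hC : HasStrictFDerivAt (fun p : EE => p.2.2.1)
      ((ContinuousLinearMap.fst ℝ ℝ ℝ).comp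
        ((ContinuousLinearMap.snd ℝ ℝ (ℝ×ℝ)).comp (ContinuousLinearMap.snd ℝ ℝ (ℝ×ℝ×ℝ)))) p₀ :=
    ((ContinuousLinearMap.fst ℝ ℝ ℝ).comp
      ((ContinuousLinearMap.snd ℝ ℝ (ℝ×ℝ)).comp
        (ContinuousLinearMap.snd ℝ ℝ (ℝ×ℝ×ℝ)))).hasStrictFDerivAt
  have hT : HasStrictFDerivAt (fun p : EE => p.2.2.2)
      ((ContinuousLinearMap.snd ℝ ℝ ℝ).comp
        ((ContinuousLinearMap.snd ℝ ℝ (ℝ×ℝ)).comp (ContinuousLinearMap.snd ℝ ℝ (ℝ×ℝ×ℝ)))) p₀ :=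
    ((ContinuousLinearMap.snd ℝ ℝ ℝ).comp
      ((ContinuousLinearMap.snd ℝ ℝ (ℝ×ℝ)).comp
        (ContinuousLinearMap.snd ℝ ℝ (ℝ×ℝ×ℝ)))).hasStrictFDerivAt
  have hth1 : HasStrictFDerivAt (fun p : EE => th1 p.1) _ p₀ :=
    (hA.mul_const DD).const_add (π/2)
  have hth2 : HasStrictFDerivAt (fun p : EE => th2 p.1 p.2.1) _ p₀ :=
    hth1.add (hB.mul_const DD)
  have hth3 : HasStrictFDerivAt (fun p : EE => th3 p.1 p.2.1 p.2.2.1 p.2.2.2) _ p₀ :=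
    hth2.add (hC.mul (hT.sub_const (2*DD)))
  have hiA : HasStrictFDerivAt (fun p : EE => (p.1)⁻¹) _ p₀ :=
    (hasStrictDerivAt_inv h1).comp_hasStrictFDerivAt p₀ hA
  have hiB : HasStrictFDerivAt (fun p : EE => (p.2.1)⁻¹) _ p₀ :=
    (hasStrictDerivAt_inv h2).comp_hasStrictFDerivAt p₀ hB
  have hiC : HasStrictFDerivAt (fun p : EE => (p.2.2.1)⁻¹) _ p₀ :=
    (hasStrictDerivAt_inv h3).comp_hasStrictFDerivAt p₀ hC
  have hX : HasStrictFDerivAt (fun p : EE =>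
      (Real.sin (th1 p.1) - Real.sin (π/2)) / p.1
      + ((Real.sin (th2 p.1 p.2.1) - Real.sin (th1 p.1)) / p.2.1
        + (Real.sin (th3 p.1 p.2.1 p.2.2.1 p.2.2.2) - Real.sin (th2 p.1 p.2.1)) / p.2.2.1))
      _ p₀ :=
    ((hth1.sin.sub_const (Real.sin (π/2))).mul hiA).add
      (((hth2.sin.sub hth1.sin).mul hiB).add ((hth3.sin.sub hth2.sin).mul hiC))
  have hY : HasStrictFDerivAt (fun p : EE =>
      (Real.cos (π/2) - Real.cos (th1 p.1)) / p.1
      + ((Real.cos (th1 p.1) - Real.cos (th2 p.1 p.2.1)) / p.2.1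
        + (Real.cos (th2 p.1 p.2.1) - Real.cos (th3 p.1 p.2.1 p.2.2.1 p.2.2.2)) / p.2.2.1))
      _ p₀ :=
    ((hth1.cos.const_sub (Real.cos (π/2))).mul hiA).add
      (((hth1.cos.sub hth2.cos).mul hiB).add ((hth2.cos.sub hth3.cos).mul hiC))
  refine ⟨_, hX.prodMk (hY.prodMk (hth3.prodMk hT)), range_top_of_matrix _ ?_⟩
  intro v
  simp only [ContinuousLinearMap.add_apply, ContinuousLinearMap.prod_apply,
    ContinuousLinearMap.smul_apply, ContinuousLinearMap.comp_apply,
    ContinuousLinearMap.coe_fst', ContinuousLinearMap.coe_snd',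
    ContinuousLinearMap.smulRight_apply, ContinuousLinearMap.sub_apply,
    ContinuousLinearMap.coe_comp', Function.comp_apply, smul_eq_mul, Pi.sub_apply, p₀]
  rw [th1_val, th2_val, th3_val]
  simp only [ContinuousLinearMap.neg_apply, ContinuousLinearMap.smul_apply,
    ContinuousLinearMap.comp_apply, ContinuousLinearMap.coe_fst', ContinuousLinearMap.coe_snd',
    Function.comp_apply, smul_eq_mul, neg_mul, neg_neg,
    sin_7pi6, cos_7pi6, sin_11pi6, cos_11pi6, sin_5pi2, cos_5pi2,
    Real.sin_pi_div_two, Real.cos_pi_div_two, Prod.mk.injEq]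
  refine ⟨by unfold DD; ring, by unfold DD; ring, by unfold DD; ring, trivial⟩


def SS : Set EE := Set.Ioo 0 1 ×ˢ (Set.Ioo 0 1 ×ˢ (Set.Ioo 0 1 ×ˢ Set.Ioi (2*DD)))

lemma SS_open : IsOpen SS :=
  isOpen_Ioo.prod (isOpen_Ioo.prod (isOpen_Ioo.prod isOpen_Ioi))

lemma p0_mem_SS : p₀ ∈ SS := by
  have := Real.pi_pos
  simp only [SS, p₀, Set.mem_prod, Set.mem_Ioo, Set.mem_Ioi]
  norm_num
  unfold DD
  linarith

lemma Ff_p0 : Ff p₀ = (0, 0, 5*π/2, 4*π) := by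
  unfold Ff p₀
  simp only
  rw [th1_val, th2_val, th3_val]
  simp only [sin_7pi6, cos_7pi6, sin_11pi6, cos_11pi6, sin_5pi2, cos_5pi2,
    Real.sin_pi_div_two, Real.cos_pi_div_two, Prod.mk.injEq]
  norm_num
  ring_nf

lemma mem_reach {a b c t : ℝ} (ha : a ∈ Set.Ioo (0:ℝ) 1) (hb : b ∈ Set.Ioo (0:ℝ) 1)
    (hc : c ∈ Set.Ioo (0:ℝ) 1) (ht : 2*DD < t) :
    (((Ff (a, b, c, t)).1 : ℝ), (Ff (a, b, c, t)).2.1,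
      (↑((Ff (a, b, c, t)).2.2.1) : Real.Angle)) ∈ DubinsReach t := by
  refine ⟨ctrl a b c, ctrl_measurable a b c, ?_, ?_⟩
  · intro τ
    unfold ctrl
    obtain ⟨ha0, ha1⟩ := ha; obtain ⟨hb0, hb1⟩ := hb; obtain ⟨hc0, hc1⟩ := hc
    split_ifs <;> exact Set.mem_Icc.mpr ⟨by linarith, by linarith⟩
  · have hX := xpart (a := a) (b := b) (c := c) (t := t)
      (ne_of_gt ha.1) (ne_of_gt hb.1) (ne_of_gt hc.1) ht.le
    have hY := ypart (a := a) (b := b) (c := c) (t := t)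
      (ne_of_gt ha.1) (ne_of_gt hb.1) (ne_of_gt hc.1) ht.le
    have hAn := apart (a := a) (b := b) (c := c) ht.le
    exact Prod.ext_iff.mpr ⟨by rw [hX]; rfl,
      Prod.ext_iff.mpr ⟨by rw [hY]; rfl, by rw [hAn]; rfl⟩⟩

theorem main : ∃ δ₀ > (0 : ℝ), ∀ t : ℝ, |t - 4 * Real.pi| < δ₀ →
    ((0 : ℝ), (0 : ℝ), (↑(Real.pi / 2) : Real.Angle)) ∈ interior (DubinsReach t) := by
  obtain ⟨L, hL, hLtop⟩ := exists_deriv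
  have hmap : Filter.map Ff (nhds p₀) = nhds (Ff p₀) := hL.map_nhds_eq_of_surj hLtop
  have himg : Ff '' SS ∈ nhds (((0:ℝ), (0:ℝ), 5*π/2, 4*π) : EE) := by
    rw [← Ff_p0, ← hmap]
    exact Filter.image_mem_map (SS_open.mem_nhds p0_mem_SS)
  obtain ⟨ε, hε, hball⟩ := Metric.mem_nhds_iff.mp himg
  refine ⟨ε, hε, fun t htd => ?_⟩
  rw [mem_interior]
  refine ⟨(Metric.ball (0:ℝ) ε) ×ˢ ((Metric.ball (0:ℝ) ε) ×ˢ
      ((fun θ : ℝ => (θ : Real.Angle)) '' Metric.ball (5*π/2) ε)), ?_, ?_, ?_⟩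
  · rintro ⟨x, y, φ⟩ ⟨hx, hy, θ, hθ, rfl⟩
    have hz : ((x, y, θ, t) : EE) ∈ Metric.ball (((0:ℝ), (0:ℝ), 5*π/2, 4*π) : EE) ε := by
      simp only [Metric.mem_ball, Prod.dist_eq, Real.dist_eq, max_lt_iff]
      simp only [Metric.mem_ball, Real.dist_eq] at hx hy hθ
      refine ⟨by simpa using hx, by simpa using hy, by simpa using hθ, by simpa using htd⟩
    obtain ⟨p, hpS, hFp⟩ := hball hz
    obtain ⟨a, b', c, t'⟩ := p
    obtain ⟨hpa, hpb, hpc, hpt⟩ := hpS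
    have h4 : t' = t := congrArg (fun z : EE => z.2.2.2) hFp
    subst h4
    have hm := mem_reach hpa hpb hpc hpt
    have h1 : (Ff (a, b', c, t')).1 = x := congrArg (fun z : EE => z.1) hFp
    have h2 : (Ff (a, b', c, t')).2.1 = y := congrArg (fun z : EE => z.2.1) hFp
    have h3 : (Ff (a, b', c, t')).2.2.1 = θ := congrArg (fun z : EE => z.2.2.1) hFp
    rwa [h1, h2, h3] at hm
  · exact Metric.isOpen_ball.prod (Metric.isOpen_ball.prod
      (QuotientAddGroup.isOpenMap_coe _ Metric.isOpen_ball))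
  · refine ⟨Metric.mem_ball_self hε, Metric.mem_ball_self hε,
      ⟨5*π/2, Metric.mem_ball_self hε, ?_⟩⟩
    show ((5*π/2 : ℝ) : Real.Angle) = ((π/2 : ℝ) : Real.Angle)
    exact Real.Angle.angle_eq_iff_two_pi_dvd_sub.2 ⟨1, by push_cast; ring⟩

end Dub
end

theorem interior_at_4pi :
    ∃ δ₀ > (0 : ℝ), ∀ t : ℝ, |t - 4 * Real.pi| < δ₀ →
      ((0 : ℝ), (0 : ℝ), (↑(Real.pi / 2) : Real.Angle)) ∈ interior (DubinsReach t) :=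
  Dub.main
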